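/- arXiv:1907.13623 — 2 statements merged into one kernel-verified Lean document; each statement's English description precedes it below -/
import Mathlib

section
/- Any set of pairwise distinct, pairwise commuting N-qubit Pauli strings, none of which is the identity string I^{⊗N}, has cardinality at most 2^N − 1. -/
open Matrix Finset

inductive Pauli : Type
  | I | X | Y | Z
  deriving DecidableEq

instance : Fintype Pauli :=
  ⟨{.I, .X, .Y, .Z}, fun x => by cases x <;> simp⟩

noncomputable def Pauli.mat : Pauli → Matrix (Fin 2) (Fin 2) ℂ
  | .I => 1
  | .X => !![0, 1; 1, 0]
  | .Y => !![0, -Complex.I; Complex.I, 0]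
  | .Z => !![1, 0; 0, -1]

/-- An `N`-qubit Pauli string: a function from qubit indices to single-qubit Paulis. -/
abbrev PauliString (N : ℕ) := Fin N → Pauli

/-- The `2^N × 2^N` matrix of a Pauli string, as the tensor (Kronecker) product of its
entries, with rows/columns indexed by `Fin N → Fin 2`. -/
noncomputable def Pmat {N : ℕ} (A : PauliString N) :
    Matrix (Fin N → Fin 2) (Fin N → Fin 2) ℂ :=
  Matrix.of fun x y => ∏ j, (A j).mat (x j) (y j)

namespace PauliAux

/-- symplectic encoding -/
def enc : Pauli → ZMod 2 × ZMod 2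
  | .I => (0, 0)
  | .X => (1, 0)
  | .Y => (1, 1)
  | .Z => (0, 1)

def eps (a b : Pauli) : ZMod 2 := (enc a).1 * (enc b).2 + (enc a).2 * (enc b).1

/-- product (up to phase) of single-qubit Paulis -/
def emul : Pauli → Pauli → Pauli
  | .I, b => b
  | a, .I => a
  | .X, .X => .I
  | .X, .Y => .Z
  | .X, .Z => .Y
  | .Y, .X => .Z
  | .Y, .Y => .I
  | .Y, .Z => .X
  | .Z, .X => .Y
  | .Z, .Y => .X
  | .Z, .Z => .I

/-- phase in `a.mat * b.mat = ph a b • (emul a b).mat` -/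
noncomputable def ph : Pauli → Pauli → ℂ
  | .I, _ => 1
  | _, .I => 1
  | .X, .X => 1
  | .X, .Y => Complex.I
  | .X, .Z => -Complex.I
  | .Y, .X => -Complex.I
  | .Y, .Y => 1
  | .Y, .Z => Complex.I
  | .Z, .X => Complex.I
  | .Z, .Y => -Complex.I
  | .Z, .Z => 1

noncomputable def sgn : ZMod 2 → ℂ := fun t => if t = 0 then 1 else -1

lemma zmod2_cases (t : ZMod 2) : t = 0 ∨ t = 1 := by revert t; decide

lemma sgn_add (s t : ZMod 2) : sgn (s + t) = sgn s * sgn t := by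
  rcases zmod2_cases s with rfl | rfl <;> rcases zmod2_cases t with rfl | rfl <;>
    simp [sgn, show (1 + 1 : ZMod 2) = 0 from rfl]

lemma sgn_sum {ι : Type*} (s : Finset ι) (g : ι → ZMod 2) :
    sgn (∑ j ∈ s, g j) = ∏ j ∈ s, sgn (g j) := by
  classical
  induction s using Finset.induction with
  | empty => simp [sgn]
  | insert _ _ h ih => simp [Finset.sum_insert h, Finset.prod_insert h, sgn_add, ih]

set_option maxHeartbeats 1000000 in
lemma mat_mul (a b : Pauli) : a.mat * b.mat = ph a b • (emul a b).mat := by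
  cases a <;> cases b <;>
    · ext i j
      fin_cases i <;> fin_cases j <;>
        simp [Pauli.mat, ph, emul, Matrix.one_fin_two, Matrix.mul_apply, Fin.sum_univ_two,
          Complex.ext_iff]

lemma ph_comm (a b : Pauli) : ph b a = sgn (eps a b) * ph a b := by
  cases a <;> cases b <;>
    norm_num [ph, eps, enc, sgn, show (1 + 1 : ZMod 2) = 0 from rfl, Complex.ext_iff]

lemma emul_comm (a b : Pauli) : emul b a = emul a b := by
  cases a <;> cases b <;> rfl

lemma ph_ne_zero (a b : Pauli) : ph a b ≠ 0 := by
  cases a <;> cases b <;> simp [ph, Complex.I_ne_zero]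

def col : Pauli → Fin 2 → Fin 2
  | .I => id
  | .Z => id
  | .X => fun i => i + 1
  | .Y => fun i => i + 1

lemma mat_col_ne_zero (p : Pauli) (i : Fin 2) : p.mat i (col p i) ≠ 0 := by
  cases p <;> fin_cases i <;>
    simp [Pauli.mat, col, Matrix.one_fin_two, Complex.I_ne_zero]

lemma Pmat_ne_zero {N : ℕ} (A : PauliString N) : Pmat A ≠ 0 := by
  intro h
  have := congrFun (congrFun h (fun _ => 0)) (fun j => col (A j) 0)
  simp only [Pmat, Matrix.of_apply, Matrix.zero_apply] at this
  exact Finset.prod_ne_zero_iff.2 (fun j _ => mat_col_ne_zero (A j) 0) this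

lemma Pmat_mul {N : ℕ} (A B : PauliString N) :
    Pmat A * Pmat B = (∏ j, ph (A j) (B j)) • Pmat (fun j => emul (A j) (B j)) := by
  ext x y
  simp only [Matrix.mul_apply, Pmat, Matrix.of_apply, Matrix.smul_apply, smul_eq_mul]
  calc ∑ z : Fin N → Fin 2, (∏ j, (A j).mat (x j) (z j)) * ∏ j, (B j).mat (z j) (y j)
      = ∑ z : Fin N → Fin 2, ∏ j, ((A j).mat (x j) (z j) * (B j).mat (z j) (y j)) := by
        simp [Finset.prod_mul_distrib]
    _ = ∏ j, ∑ t : Fin 2, (A j).mat (x j) t * (B j).mat t (y j) :=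
        (Fintype.prod_sum (fun j t => (A j).mat (x j) t * (B j).mat t (y j))).symm
    _ = ∏ j, ((A j).mat * (B j).mat) (x j) (y j) := by
        simp [Matrix.mul_apply]
    _ = ∏ j, (ph (A j) (B j) * (emul (A j) (B j)).mat (x j) (y j)) := by
        simp [mat_mul, Matrix.smul_apply, smul_eq_mul]
    _ = (∏ j, ph (A j) (B j)) * ∏ j, (emul (A j) (B j)).mat (x j) (y j) := by
        rw [Finset.prod_mul_distrib]

lemma commute_iff {N : ℕ} (A B : PauliString N) :
    Pmat A * Pmat B = Pmat B * Pmat A ↔ (∑ j, eps (A j) (B j)) = 0 := by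
  rw [Pmat_mul, Pmat_mul]
  have hM : (fun j => emul (B j) (A j)) = fun j => emul (A j) (B j) := by
    funext j; exact emul_comm (A j) (B j)
  rw [hM]
  have hc : (∏ j, ph (B j) (A j)) = sgn (∑ j, eps (A j) (B j)) * ∏ j, ph (A j) (B j) := by
    rw [sgn_sum]
    rw [← Finset.prod_mul_distrib]
    exact Finset.prod_congr rfl fun j _ => ph_comm (A j) (B j)
  rw [hc]
  set c := ∏ j, ph (A j) (B j) with hcdef
  have hc0 : c ≠ 0 := Finset.prod_ne_zero_iff.2 fun j _ => ph_ne_zero (A j) (B j)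
  constructor
  · intro h
    have h2 : (c - sgn (∑ j, eps (A j) (B j)) * c) • Pmat (fun j => emul (A j) (B j)) = 0 := by
      rw [sub_smul, h, sub_self]
    rcases smul_eq_zero.1 h2 with h3 | h3
    · have h4 : sgn (∑ j, eps (A j) (B j)) = 1 := by
        have h5 : sgn (∑ j, eps (A j) (B j)) * c = 1 * c := by linear_combination -h3
        exact mul_right_cancel₀ hc0 h5
      rcases zmod2_cases (∑ j, eps (A j) (B j)) with h5 | h5
      · exact h5
      · rw [h5] at h4; norm_num [sgn] at h4
    · exact absurd h3 (Pmat_ne_zero _)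
  · intro h
    rw [h]
    simp [sgn]

end PauliAux

open PauliAux

section Symplectic

variable (N : ℕ)

abbrev SympV (N : ℕ) := (Fin N → ZMod 2) × (Fin N → ZMod 2)

def sform : LinearMap.BilinForm (ZMod 2) (SympV N) :=
  LinearMap.mk₂ (ZMod 2)
    (fun v w => ∑ j, (v.1 j * w.2 j + v.2 j * w.1 j))
    (fun v v' w => by
      rw [← Finset.sum_add_distrib]
      refine Finset.sum_congr rfl fun j _ => ?_
      show (v.1 j + v'.1 j) * w.2 j + (v.2 j + v'.2 j) * w.1 j = _
      ring)
    (fun c v w => by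
      show (∑ j, (c * v.1 j * w.2 j + c * v.2 j * w.1 j)) = c * ∑ j, _
      rw [Finset.mul_sum]
      refine Finset.sum_congr rfl fun j _ => ?_
      ring)
    (fun v w w' => by
      rw [← Finset.sum_add_distrib]
      refine Finset.sum_congr rfl fun j _ => ?_
      show v.1 j * (w.2 j + w'.2 j) + v.2 j * (w.1 j + w'.1 j) = _
      ring)
    (fun c v w => by
      show (∑ j, (v.1 j * (c * w.2 j) + v.2 j * (c * w.1 j))) = c * ∑ j, _
      rw [Finset.mul_sum]
      refine Finset.sum_congr rfl fun j _ => ?_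
      ring)

lemma sform_apply (v w : SympV N) :
    sform N v w = ∑ j, (v.1 j * w.2 j + v.2 j * w.1 j) := rfl

lemma sform_symm (v w : SympV N) : sform N v w = sform N w v := by
  rw [sform_apply, sform_apply]
  refine Finset.sum_congr rfl fun j _ => ?_
  ring

lemma sform_refl : (sform N).IsRefl := by
  intro v w h
  rw [← sform_symm]; exact h

lemma sform_nondegenerate : (sform N).Nondegenerate := by
  refine (LinearMap.IsRefl.nondegenerate_iff_separatingLeft (sform_refl N)).2 ?_
  intro v h
  have h1 : ∀ j, v.1 j = 0 := by
    intro j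
    have := h (0, Pi.single j 1)
    simpa [sform_apply, Pi.single_apply, mul_ite, Finset.sum_ite_eq'] using this
  have h2 : ∀ j, v.2 j = 0 := by
    intro j
    have := h (Pi.single j 1, 0)
    simpa [sform_apply, Pi.single_apply, ite_mul, Finset.sum_ite_eq'] using this
  ext j
  · exact h1 j
  · exact h2 j

end Symplectic

/-- Any set of pairwise distinct, pairwise commuting `N`-qubit Pauli strings, none of which
is the identity string, has cardinality at most `2^N - 1`. -/
theorem commuting_family_card_le {N : ℕ} (S : Finset (PauliString N))
    (hid : ∀ A ∈ S, A ≠ fun _ => Pauli.I)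
    (hcomm : ∀ A ∈ S, ∀ B ∈ S, Pmat A * Pmat B = Pmat B * Pmat A) :
    S.card ≤ 2 ^ N - 1 := by
  classical
  haveI : Fact (Nat.Prime 2) := ⟨by norm_num⟩
  -- the encoding map
  let f : PauliString N → SympV N :=
    fun A => (fun j => (enc (A j)).1, fun j => (enc (A j)).2)
  have hf : Function.Injective f := by
    intro A B h
    funext j
    have h1 : (enc (A j)).1 = (enc (B j)).1 := congrFun (congrArg Prod.fst h) j
    have h2 : (enc (A j)).2 = (enc (B j)).2 := congrFun (congrArg Prod.snd h) j
    have : enc (A j) = enc (B j) := Prod.ext h1 h2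
    revert this
    have : Function.Injective enc := by decide
    exact fun h => this h
  have hform : ∀ A ∈ S, ∀ B ∈ S, sform N (f A) (f B) = 0 := by
    intro A hA B hB
    have := (commute_iff A B).1 (hcomm A hA B hB)
    rw [sform_apply]
    simpa [eps] using this
  have hne : ∀ A ∈ S, f A ≠ 0 := by
    intro A hA h
    apply hid A hA
    funext j
    have h1 : (enc (A j)).1 = 0 := congrFun (congrArg Prod.fst h) j
    have h2 : (enc (A j)).2 = 0 := congrFun (congrArg Prod.snd h) j
    cases hAj : A j with
    | I => rfl
    | X => rw [hAj] at h1; simp [enc] at h1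
    | Y => rw [hAj] at h1; simp [enc] at h1
    | Z => rw [hAj] at h2; simp [enc] at h2
  -- the span of the image is isotropic
  set W : Submodule (ZMod 2) (SympV N) := Submodule.span (ZMod 2) (↑(S.image f)) with hW
  have hWiso : ∀ v ∈ W, ∀ w ∈ W, sform N v w = 0 := by
    have key : ∀ w ∈ (↑(S.image f) : Set (SympV N)), ∀ v ∈ W, sform N v w = 0 := by
      intro w hw
      intro v hv
      induction hv using Submodule.span_induction with
      | mem x hx =>
        simp only [Finset.coe_image, Set.mem_image, Finset.mem_coe] at hx hw
        obtain ⟨A, hA, rfl⟩ := hx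
        obtain ⟨B, hB, rfl⟩ := hw
        exact hform A hA B hB
      | zero => simp
      | add x y _ _ hx hy => simp [hx, hy]
      | smul c x _ hx => simp [hx]
    intro v hv w hw
    induction hw using Submodule.span_induction with
    | mem x hx => exact key x hx v hv
    | zero => simp
    | add x y _ _ hx hy => simp [hx, hy]
    | smul c x _ hx => simp [hx]
  -- dimension bound
  have hle : W ≤ (sform N).orthogonal W := by
    intro v hv
    rw [LinearMap.BilinForm.mem_orthogonal_iff]
    intro w hw
    exact hWiso w hw v hv
  have hVrank : Module.finrank (ZMod 2) (SympV N) = N + N := by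
    rw [Module.finrank_prod, Module.finrank_pi]
    simp
  have horth := LinearMap.BilinForm.finrank_orthogonal (sform_nondegenerate N)
    W
  have hrle : Module.finrank (ZMod 2) W ≤ Module.finrank (ZMod 2) ((sform N).orthogonal W) :=
    Submodule.finrank_mono hle
  have hWV : Module.finrank (ZMod 2) W ≤ Module.finrank (ZMod 2) (SympV N) :=
    Submodule.finrank_le W
  have hdim : Module.finrank (ZMod 2) W ≤ N := by
    rw [horth, hVrank] at hrle
    rw [hVrank] at hWV
    omega
  -- counting
  haveI : Fintype ↥W := Fintype.ofFinite _
  have hcardW : Fintype.card ↥W = 2 ^ Module.finrank (ZMod 2) W := by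
    have := Module.card_eq_pow_finrank (K := ZMod 2) (V := ↥W)
    rwa [ZMod.card] at this
  have hcardle : Fintype.card ↥W ≤ 2 ^ N := by
    rw [hcardW]; exact Nat.pow_le_pow_right (by norm_num) hdim
  set T : Finset (SympV N) := S.image f with hT
  have hTcard : T.card = S.card := Finset.card_image_of_injective S hf
  have h0T : (0 : SympV N) ∉ T := by
    intro h
    simp only [hT, Finset.mem_image] at h
    obtain ⟨A, hA, hA0⟩ := h
    exact hne A hA hA0
  have hsubW : ∀ v ∈ insert (0 : SympV N) T, v ∈ W := by
    intro v hv
    rcases Finset.mem_insert.1 hv with rfl | hv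
    · exact W.zero_mem
    · exact Submodule.subset_span hv
  have hcard : (insert (0 : SympV N) T).card ≤ Fintype.card ↥W := by
    apply Finset.card_le_card_of_injOn
      (fun v => if h : v ∈ W then (⟨v, h⟩ : ↥W) else 0)
    · intro v _; exact Finset.mem_univ _
    · intro a ha b hb hab
      have ha' : a ∈ W := hsubW a (by simpa using ha)
      have hb' : b ∈ W := hsubW b (by simpa using hb)
      simp only [dif_pos ha', dif_pos hb'] at hab
      exact congrArg Subtype.val hab
  have hins : (insert (0 : SympV N) T).card = T.card + 1 :=
    Finset.card_insert_of_notMem h0T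
  have h1 : 1 ≤ 2 ^ N := Nat.one_le_two_pow
  omega
end

section
/- The minimum number of parts in a partition of the set of all 4^N − 1 non-identity N-qubit Pauli strings into families of pairwise commuting strings is exactly 2^N + 1; that is, at least 2^N + 1 pairwise-commuting families are required, and a partition into 2^N + 1 pairwise-commuting families, each of size 2^N − 1, exists. -/
open Matrix Finset

/-- The set of all `4^N - 1` non-identity `N`-qubit Pauli strings. -/
def nonIdStrings (N : ℕ) : Finset (PauliString N) :=
  Finset.univ.filter (fun A => A ≠ fun _ => Pauli.I)

/-- `P` is a partition of the finite set `T` of Pauli strings into families of pairwise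
commuting strings: the parts are nonempty, pairwise disjoint, cover `T`, and each part
consists of pairwise commuting strings. -/
def IsCommPartition {N : ℕ} (T : Finset (PauliString N))
    (P : Finset (Finset (PauliString N))) : Prop :=
  (∀ S ∈ P, S.Nonempty) ∧
  (P : Set (Finset (PauliString N))).PairwiseDisjoint id ∧
  P.sup id = T ∧
  ∀ S ∈ P, ∀ A ∈ S, ∀ B ∈ S, Pmat A * Pmat B = Pmat B * Pmat A

namespace PP

def pc : Pauli → ZMod 2 × ZMod 2
  | .I => (0, 0)
  | .X => (1, 0)
  | .Z => (0, 1)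
  | .Y => (1, 1)

def cp (v : ZMod 2 × ZMod 2) : Pauli :=
  if v.1 = 0 then (if v.2 = 0 then .I else .Z) else (if v.2 = 0 then .X else .Y)

lemma pc_cp : ∀ v, pc (cp v) = v := by decide
lemma pc_injective : Function.Injective pc := by decide
lemma pc_eq_zero {P : Pauli} (h : pc P = 0) : P = Pauli.I := by revert h; revert P; decide

def om (P Q : Pauli) : ZMod 2 := (pc P).1 * (pc Q).2 + (pc Q).1 * (pc P).2

noncomputable def chi (a : ZMod 2) : ℂ := if a = 0 then 1 else -1

lemma mat_mul_comm (P Q : Pauli) : P.mat * Q.mat = chi (om P Q) • (Q.mat * P.mat) := by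
  cases P <;> cases Q <;>
    · ext i j
      fin_cases i <;> fin_cases j <;>
        simp [Pauli.mat, om, pc, chi, Matrix.mul_apply, Fin.sum_univ_two, Matrix.one_apply,
          show (1:ZMod 2) ≠ 0 from by decide, show (1:ZMod 2) + 1 = 0 from by decide]

lemma mat_mul_self (P : Pauli) : P.mat * P.mat = 1 := by
  cases P <;>
    · simp only [Pauli.mat]
      ext i j
      fin_cases i <;> fin_cases j <;>
        simp [Matrix.mul_apply, Fin.sum_univ_two, Matrix.one_apply]

lemma chi_zero : chi 0 = 1 := by simp [chi]

lemma chi_add (a b : ZMod 2) : chi (a + b) = chi a * chi b := by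
  have h : ∀ c : ZMod 2, c = 0 ∨ c = 1 := by decide
  rcases h a with rfl | rfl <;> rcases h b with rfl | rfl <;>
    simp [chi, show (1:ZMod 2) ≠ 0 from by decide, show (1:ZMod 2) + 1 = 0 from by decide]

lemma chi_sum {ι : Type*} (s : Finset ι) (f : ι → ZMod 2) :
    chi (∑ j ∈ s, f j) = ∏ j ∈ s, chi (f j) := by
  induction s using Finset.cons_induction with
  | empty => simp [chi_zero]
  | cons a s ha ih => rw [Finset.sum_cons, Finset.prod_cons, chi_add, ih]

variable {N : ℕ}

abbrev V (N : ℕ) := (Fin N → ZMod 2) × (Fin N → ZMod 2)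

def Estr (A : PauliString N) : V N :=
  (fun j => (pc (A j)).1, fun j => (pc (A j)).2)

def spB (N : ℕ) : LinearMap.BilinForm (ZMod 2) (V N) :=
  LinearMap.mk₂ (ZMod 2) (fun v w => ∑ j, (v.1 j * w.2 j + w.1 j * v.2 j))
    (by intro v v' w
        simp only [Prod.fst_add, Prod.snd_add, Pi.add_apply, ← Finset.sum_add_distrib]
        exact Finset.sum_congr rfl fun j _ => by ring)
    (by intro c v w
        simp only [Prod.smul_fst, Prod.smul_snd, Pi.smul_apply, smul_eq_mul, Finset.mul_sum]
        exact Finset.sum_congr rfl fun j _ => by ring)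
    (by intro v w w'
        simp only [Prod.fst_add, Prod.snd_add, Pi.add_apply, ← Finset.sum_add_distrib]
        exact Finset.sum_congr rfl fun j _ => by ring)
    (by intro c v w
        simp only [Prod.smul_fst, Prod.smul_snd, Pi.smul_apply, smul_eq_mul, Finset.mul_sum]
        exact Finset.sum_congr rfl fun j _ => by ring)

lemma spB_apply (v w : V N) :
    spB N v w = ∑ j, (v.1 j * w.2 j + w.1 j * v.2 j) := rfl

lemma spB_symm (v w : V N) : spB N v w = spB N w v := by
  simp only [spB_apply]
  exact Finset.sum_congr rfl fun j _ => by ring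

lemma spB_refl : (spB N).IsRefl := fun v w h => by rwa [spB_symm]

lemma spB_nondegenerate : (spB N).Nondegenerate := by
  refine (LinearMap.IsRefl.nondegenerate_iff_separatingLeft spB_refl).mpr ?_
  intro v hv
  have h1 : ∀ j, v.1 j = 0 := by
    intro j
    have := hv (0, Pi.single j 1)
    simpa [spB_apply, Pi.single_apply, mul_ite, Finset.sum_ite_eq'] using this
  have h2 : ∀ j, v.2 j = 0 := by
    intro j
    have := hv (Pi.single j 1, 0)
    simpa [spB_apply, Pi.single_apply, ite_mul, Finset.sum_ite_eq'] using this
  ext j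
  · exact h1 j
  · exact h2 j

lemma finrank_V : Module.finrank (ZMod 2) (V N) = 2 * N := by
  rw [Module.finrank_prod, Module.finrank_pi]
  simp [two_mul]

lemma card_isotropic (W : Submodule (ZMod 2) (V N))
    (hW : ∀ v ∈ W, ∀ w ∈ W, spB N v w = 0) :
    Nat.card W ≤ 2 ^ N := by
  have hle : W ≤ (spB N).orthogonal W := by
    intro v hv w hw
    exact spB_refl _ _ (hW v hv w hw)
  have horth := LinearMap.BilinForm.finrank_orthogonal (B := spB N)
    spB_nondegenerate W
  have hrank : Module.finrank (ZMod 2) W ≤ N := by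
    have h1 := Submodule.finrank_mono hle
    rw [horth, finrank_V] at h1
    omega
  haveI : Fintype W := Fintype.ofFinite W
  rw [Nat.card_eq_fintype_card, Module.card_eq_pow_finrank (K := ZMod 2) (V := W), ZMod.card]
  exact Nat.pow_le_pow_right (by norm_num) hrank

lemma Pmat_mul (A B : PauliString N) :
    Pmat A * Pmat B = Matrix.of fun x y => ∏ j, ((A j).mat * (B j).mat) (x j) (y j) := by
  ext x y
  simp only [Pmat, Matrix.mul_apply, Matrix.of_apply, ← Finset.prod_mul_distrib]
  rw [Finset.prod_univ_sum]
  simp [Fintype.piFinset_univ]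

lemma Pmat_mul_comm' (A B : PauliString N) :
    Pmat A * Pmat B = chi (spB N (Estr A) (Estr B)) • (Pmat B * Pmat A) := by
  rw [Pmat_mul, Pmat_mul, spB_apply, chi_sum]
  ext x y
  simp only [Matrix.of_apply, Matrix.smul_apply, smul_eq_mul, ← Finset.prod_mul_distrib]
  refine Finset.prod_congr rfl fun j _ => ?_
  rw [mat_mul_comm (A j) (B j)]
  simp [om, Estr, mul_comm]

lemma Pmat_mul_self (A : PauliString N) : Pmat A * Pmat A = 1 := by
  rw [Pmat_mul]
  ext x y
  simp only [Matrix.of_apply, Matrix.one_apply]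
  simp only [mat_mul_self, Matrix.one_apply]
  by_cases h : x = y
  · subst h; simp
  · rw [if_neg h]
    obtain ⟨j, hj⟩ := Function.ne_iff.mp h
    exact Finset.prod_eq_zero (Finset.mem_univ j) (by rw [if_neg hj])

lemma Pmat_mul_ne_zero (A B : PauliString N) : Pmat A * Pmat B ≠ 0 := by
  intro h
  have : (Pmat A * Pmat B) * (Pmat B * Pmat A) = 1 := by
    calc (Pmat A * Pmat B) * (Pmat B * Pmat A)
        = Pmat A * (Pmat B * Pmat B) * Pmat A := by simp only [mul_assoc]
    _ = 1 := by rw [Pmat_mul_self, mul_one, Pmat_mul_self]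
  rw [h, zero_mul] at this
  exact one_ne_zero this.symm

lemma comm_iff (A B : PauliString N) :
    Pmat A * Pmat B = Pmat B * Pmat A ↔ spB N (Estr A) (Estr B) = 0 := by
  constructor
  · intro h
    by_contra hs
    have h1 : spB N (Estr A) (Estr B) = 1 := by
      have h' : ∀ c : ZMod 2, c = 0 ∨ c = 1 := by decide
      rcases h' (spB N (Estr A) (Estr B)) with h' | h'
      · exact absurd h' hs
      · exact h'
    have h2 := Pmat_mul_comm' A B
    rw [h1] at h2
    simp only [chi, if_neg (show (1:ZMod 2) ≠ 0 from by decide)] at h2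
    rw [h] at h2
    have h3 : (2 : ℂ) • (Pmat B * Pmat A) = 0 := by
      rw [two_smul]
      nth_rewrite 1 [h2]
      simp
    rcases smul_eq_zero.mp h3 with h4 | h4
    · norm_num at h4
    · exact Pmat_mul_ne_zero B A h4
  · intro h
    rw [Pmat_mul_comm' A B, h, chi_zero, one_smul]

lemma Estr_injective : Function.Injective (Estr (N := N)) := by
  intro A B h
  funext j
  apply pc_injective
  have h1 := congrArg (fun v => v.1 j) h
  have h2 := congrArg (fun v => v.2 j) h
  exact Prod.ext h1 h2

lemma Estr_eq_zero {A : PauliString N} (h : Estr A = 0) : A = fun _ => Pauli.I := by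
  funext j
  apply pc_eq_zero
  have h1 := congrArg (fun v => v.1 j) h
  have h2 := congrArg (fun v => v.2 j) h
  exact Prod.ext h1 h2

lemma card_comm_family (S : Finset (PauliString N)) (hS : S ⊆ nonIdStrings N)
    (hcomm : ∀ A ∈ S, ∀ B ∈ S, Pmat A * Pmat B = Pmat B * Pmat A) :
    S.card + 1 ≤ 2 ^ N := by
  classical
  set W : Submodule (ZMod 2) (V N) := Submodule.span (ZMod 2) (Estr '' S) with hWdef
  have hgen : ∀ v ∈ Estr '' (S : Set (PauliString N)), ∀ w ∈ Estr '' (S : Set (PauliString N)),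
      spB N v w = 0 := by
    rintro v ⟨A, hA, rfl⟩ w ⟨B, hB, rfl⟩
    exact (comm_iff A B).mp (hcomm A hA B hB)
  have hW : ∀ v ∈ W, ∀ w ∈ W, spB N v w = 0 := by
    intro v hv w hw
    induction hv using Submodule.span_induction with
    | mem x hx =>
      induction hw using Submodule.span_induction with
      | mem y hy => exact hgen x hx y hy
      | zero => simp
      | add y z _ _ hy hz => simp [hy, hz]
      | smul c y _ hy => simp [hy]
    | zero => simp
    | add x y _ _ hx hy => simp [map_add, LinearMap.add_apply, hx, hy]
    | smul c x _ hx => simp [hx]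
  have hcard := card_isotropic W hW
  have h0 : (0 : V N) ∉ S.image Estr := by
    simp only [Finset.mem_image, not_exists, not_and]
    intro A hA hA0
    have hId := Estr_eq_zero hA0
    have := hS hA
    rw [nonIdStrings, Finset.mem_filter] at this
    exact this.2 hId
  have hsub : ((insert (0 : V N) (S.image Estr) : Finset (V N)) : Set (V N)) ⊆ (W : Set (V N)) := by
    intro v hv
    rw [Finset.coe_insert, Set.mem_insert_iff] at hv
    rcases hv with rfl | hv
    · exact W.zero_mem
    · rw [Finset.coe_image] at hv
      exact Submodule.subset_span hv
  have hle := Set.ncard_le_ncard hsub (Set.toFinite _)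
  rw [Set.ncard_coe_finset, Finset.card_insert_of_notMem h0,
    Finset.card_image_of_injective _ Estr_injective] at hle
  have h2 : (W : Set (V N)).ncard = Nat.card W := by
    rw [← Nat.card_coe_set_eq, SetLike.coe_sort_coe]
  rw [h2] at hle
  omega

-- construction
abbrev F (N : ℕ) := GaloisField 2 N

noncomputable instance : Fintype (F N) := Fintype.ofFinite _

noncomputable def gb (hN : N ≠ 0) : Module.Basis (Fin N) (ZMod 2) (F N) :=
  Module.finBasisOfFinrankEq _ _ (GaloisField.finrank 2 hN)

noncomputable def gd (hN : N ≠ 0) : Module.Basis (Fin N) (ZMod 2) (F N) :=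
  (Algebra.traceForm (ZMod 2) (F N)).dualBasis
    (traceForm_nondegenerate _ _) (gb hN)

lemma trace_pair (hN : N ≠ 0) (u w : F N) :
    ∑ j, (gb hN).repr u j * (gd hN).repr w j = Algebra.traceForm (ZMod 2) (F N) u w := by
  conv_rhs => rw [← (gb hN).sum_repr u, ← (gd hN).sum_repr w]
  simp only [_root_.map_sum, LinearMap.sum_apply, _root_.map_smul, LinearMap.smul_apply,
    smul_eq_mul, gd,
    LinearMap.BilinForm.apply_dualBasis_right (traceForm_nondegenerate _ _)
      (Algebra.traceForm_isSymm (ZMod 2)) (gb hN)]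
  refine Finset.sum_congr rfl fun j _ => ?_
  simp only [mul_ite, mul_one, mul_zero]
  rw [Finset.sum_ite_eq' Finset.univ j]
  simp [mul_comm]

noncomputable def toPS (hN : N ≠ 0) (uv : F N × F N) : PauliString N :=
  fun j => cp ((gb hN).repr uv.1 j, (gd hN).repr uv.2 j)

lemma Estr_toPS (hN : N ≠ 0) (uv : F N × F N) :
    Estr (toPS hN uv) =
      (fun j => (gb hN).repr uv.1 j, fun j => (gd hN).repr uv.2 j) := by
  simp [Estr, toPS, pc_cp]

lemma spB_toPS (hN : N ≠ 0) (u v u' v' : F N) :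
    spB N (Estr (toPS hN (u, v))) (Estr (toPS hN (u', v'))) =
      Algebra.traceForm (ZMod 2) (F N) u v' + Algebra.traceForm (ZMod 2) (F N) u' v := by
  rw [Estr_toPS, Estr_toPS, spB_apply]
  simp only []
  rw [Finset.sum_add_distrib, trace_pair hN u v', trace_pair hN u' v]

lemma toPS_inj (hN : N ≠ 0) : Function.Injective (toPS hN) := by
  intro a b h
  have h' : ∀ j, ((gb hN).repr a.1 j, (gd hN).repr a.2 j)
      = ((gb hN).repr b.1 j, (gd hN).repr b.2 j) := by
    intro j
    have h0 := congrArg pc (congrFun h j)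
    simp only [toPS, pc_cp] at h0
    exact h0
  have h1 : a.1 = b.1 :=
    (gb hN).repr.injective (Finsupp.ext fun j => congrArg Prod.fst (h' j))
  have h2 : a.2 = b.2 :=
    (gd hN).repr.injective (Finsupp.ext fun j => congrArg Prod.snd (h' j))
  exact Prod.ext h1 h2

lemma card_F (hN : N ≠ 0) : Fintype.card (F N) = 2 ^ N := by
  have := GaloisField.card 2 N hN
  rwa [Nat.card_eq_fintype_card] at this

lemma toPS_bij (hN : N ≠ 0) : Function.Bijective (toPS hN) := by
  rw [Fintype.bijective_iff_injective_and_card]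
  refine ⟨toPS_inj hN, ?_⟩
  rw [Fintype.card_prod, card_F hN, Fintype.card_fun]
  have : Fintype.card Pauli = 4 := rfl
  rw [this, Fintype.card_fin]
  rw [show (4 : ℕ) = 2 * 2 from rfl, mul_pow]

lemma toPS_zero (hN : N ≠ 0) : toPS hN (0, 0) = fun _ => Pauli.I := by
  funext j
  simp [toPS, cp]

noncomputable def lpt (hN : N ≠ 0) : Option (F N) → F N → PauliString N
  | none => fun t => toPS hN (0, t)
  | some a => fun t => toPS hN (t, a * t)

noncomputable def line (hN : N ≠ 0) (a : Option (F N)) : Finset (PauliString N) :=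
  letI := Classical.decEq (F N)
  (Finset.univ.filter (fun t : F N => t ≠ 0)).image (lpt hN a)

lemma lpt_inj (hN : N ≠ 0) {a a' : Option (F N)} {t t' : F N} (ht : t ≠ 0)
    (h : lpt hN a t = lpt hN a' t') : a = a' ∧ t = t' := by
  cases a with
  | none =>
    cases a' with
    | none =>
      have h2 := Prod.ext_iff.mp (toPS_inj hN h)
      exact ⟨rfl, h2.2⟩
    | some a' =>
      have h2 := Prod.ext_iff.mp (toPS_inj hN h)
      have e1 : t = a' * t' := h2.2
      have e0 : (0 : F N) = t' := h2.1
      exact absurd (by rw [e1, ← e0, mul_zero]) ht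
  | some a =>
    cases a' with
    | none =>
      have h2 := Prod.ext_iff.mp (toPS_inj hN h)
      exact absurd h2.1 ht
    | some a' =>
      have h2 := Prod.ext_iff.mp (toPS_inj hN h)
      have e1 : t = t' := h2.1
      subst e1
      have e2 : a * t = a' * t := h2.2
      rw [mul_right_cancel₀ ht e2]
      exact ⟨rfl, rfl⟩

lemma mem_line (hN : N ≠ 0) {a : Option (F N)} {A : PauliString N} :
    A ∈ line hN a ↔ ∃ t, t ≠ 0 ∧ lpt hN a t = A := by
  classical
  simp only [line, Finset.mem_image, Finset.mem_filter, Finset.mem_univ, true_and]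

lemma lpt_ne_id (hN : N ≠ 0) (a : Option (F N)) {t : F N} (ht : t ≠ 0) :
    lpt hN a t ≠ fun _ => Pauli.I := by
  intro h
  rw [← toPS_zero hN] at h
  cases a <;> simp only [lpt] at h <;>
    have h2 := Prod.ext_iff.mp (toPS_inj hN h)
  · exact ht h2.2
  · exact ht h2.1

lemma line_isotropic (hN : N ≠ 0) (a : Option (F N)) {A B : PauliString N}
    (hA : A ∈ line hN a) (hB : B ∈ line hN a) : spB N (Estr A) (Estr B) = 0 := by
  obtain ⟨t, ht, rfl⟩ := (mem_line hN).mp hA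
  obtain ⟨s, hs, rfl⟩ := (mem_line hN).mp hB
  have hself : ∀ x : ZMod 2, x + x = 0 := by decide
  cases a with
  | none =>
    simp only [lpt]
    rw [spB_toPS]
    simp
  | some a =>
    simp only [lpt]
    rw [spB_toPS]
    simp only [Algebra.traceForm_apply]
    rw [show t * (a * s) = s * (a * t) by ring]
    exact hself _

lemma line_card (hN : N ≠ 0) (a : Option (F N)) : (line hN a).card = 2 ^ N - 1 := by
  classical
  rw [line]
  rw [Finset.card_image_of_injOn (fun t ht s hs h => ((lpt_inj hN (by simpa using ht) h)).2)]
  rw [Finset.filter_ne', Finset.card_erase_of_mem (Finset.mem_univ _), Finset.card_univ,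
    card_F hN]

lemma line_injective (hN : N ≠ 0) : Function.Injective (line hN) := by
  intro a a' h
  have h1 : lpt hN a 1 ∈ line hN a := (mem_line hN).mpr ⟨1, one_ne_zero, rfl⟩
  rw [h] at h1
  obtain ⟨t, ht, hteq⟩ := (mem_line hN).mp h1
  exact ((lpt_inj hN ht hteq).1).symm

lemma line_nonempty (hN : N ≠ 0) (a : Option (F N)) : (line hN a).Nonempty :=
  ⟨lpt hN a 1, (mem_line hN).mpr ⟨1, one_ne_zero, rfl⟩⟩

lemma line_disjoint (hN : N ≠ 0) {a a' : Option (F N)} (h : a ≠ a') :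
    Disjoint (line hN a) (line hN a') := by
  rw [Finset.disjoint_left]
  intro A hA hA'
  obtain ⟨t, ht, rfl⟩ := (mem_line hN).mp hA
  obtain ⟨s, hs, heq⟩ := (mem_line hN).mp hA'
  exact h (lpt_inj hN ht heq.symm).1

lemma line_cover (hN : N ≠ 0) {A : PauliString N} (hA : A ≠ fun _ => Pauli.I) :
    ∃ a, A ∈ line hN a := by
  obtain ⟨⟨u, v⟩, rfl⟩ := (toPS_bij hN).2 A
  by_cases hu : u = 0
  · subst hu
    have hv : v ≠ 0 := by
      intro hv; subst hv; exact hA (toPS_zero hN)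
    exact ⟨none, (mem_line hN).mpr ⟨v, hv, rfl⟩⟩
  · refine ⟨some (v * u⁻¹), (mem_line hN).mpr ⟨u, hu, ?_⟩⟩
    simp only [lpt]
    have : v * u⁻¹ * u = v := by field_simp
    rw [this]

lemma card_nonId (N : ℕ) : (nonIdStrings N).card = 4 ^ N - 1 := by
  classical
  rw [nonIdStrings]
  rw [Finset.filter_ne', Finset.card_erase_of_mem (Finset.mem_univ _), Finset.card_univ,
    Fintype.card_fun]
  rw [show Fintype.card Pauli = 4 from rfl, Fintype.card_fin]

lemma lower_bound {N : ℕ} (hN : 1 ≤ N) (P : Finset (Finset (PauliString N)))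
    (h : IsCommPartition (nonIdStrings N) P) : 2 ^ N + 1 ≤ P.card := by
  classical
  obtain ⟨hne, hdisj, hsup, hcomm⟩ := h
  have hsub : ∀ S ∈ P, S ⊆ nonIdStrings N := by
    intro S hS
    rw [← hsup]
    exact Finset.le_sup (f := id) hS
  have hcard : ∀ S ∈ P, S.card ≤ 2 ^ N - 1 := by
    intro S hS
    have := card_comm_family S (hsub S hS) (hcomm S hS)
    omega
  have hsum : (nonIdStrings N).card = ∑ S ∈ P, S.card := by
    rw [← hsup, Finset.sup_eq_biUnion,
      Finset.card_biUnion (fun x hx y hy hxy =>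
        hdisj (Finset.mem_coe.mpr hx) (Finset.mem_coe.mpr hy) hxy)]
    rfl
  have hbound : (nonIdStrings N).card ≤ P.card * (2 ^ N - 1) := by
    rw [hsum]
    calc ∑ S ∈ P, S.card ≤ P.card • (2 ^ N - 1) := Finset.sum_le_card_nsmul P _ _ hcard
    _ = P.card * (2 ^ N - 1) := by rw [smul_eq_mul]
  rw [card_nonId] at hbound
  have h2x : 2 ≤ 2 ^ N := by
    calc (2:ℕ) = 2 ^ 1 := rfl
    _ ≤ 2 ^ N := Nat.pow_le_pow_right (by norm_num) hN
  have h4 : (4:ℕ) ^ N = 2 ^ N * 2 ^ N := by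
    rw [show (4:ℕ) = 2 * 2 from rfl, mul_pow]
  by_contra hcon
  push_neg at hcon
  have hk : P.card ≤ 2 ^ N := by omega
  obtain ⟨y, hy⟩ : ∃ y, 2 ^ N = y + 1 := ⟨2 ^ N - 1, by omega⟩
  have hy1 : 1 ≤ y := by omega
  have hky : P.card * (2 ^ N - 1) ≤ (y + 1) * y := by
    calc P.card * (2 ^ N - 1) ≤ 2 ^ N * (2 ^ N - 1) := Nat.mul_le_mul_right _ hk
    _ = (y + 1) * y := by rw [hy, Nat.add_sub_cancel]
  have hlow : y * y + 2 * y ≤ P.card * (2 ^ N - 1) := by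
    have e1 : (4:ℕ) ^ N - 1 = y * y + 2 * y := by
      rw [h4, hy]
      have : (y+1) * (y+1) = y*y + 2*y + 1 := by ring
      omega
    omega
  have hfin : y * y + 2 * y ≤ (y + 1) * y := le_trans hlow hky
  have heq : (y + 1) * y = y * y + y := by ring
  rw [heq] at hfin
  have h2y : 2 * y ≤ y := Nat.le_of_add_le_add_left hfin
  omega

end PP

/-- The minimum number of parts in a partition of the `4^N - 1` non-identity `N`-qubit
Pauli strings into pairwise-commuting families is exactly `2^N + 1`; moreover such a
partition exists in which every part has size `2^N - 1` (a MUB structure). -/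
theorem min_commuting_partition_of_nonidentity {N : ℕ} (hN : 1 ≤ N) :
    IsLeast {k | ∃ P, IsCommPartition (nonIdStrings N) P ∧ P.card = k} (2 ^ N + 1) ∧
    ∃ P, IsCommPartition (nonIdStrings N) P ∧ P.card = 2 ^ N + 1 ∧
      ∀ S ∈ P, S.card = 2 ^ N - 1 := by
  have hN0 : N ≠ 0 := by omega
  set P : Finset (Finset (PauliString N)) := Finset.univ.image (PP.line hN0) with hPdef
  have hPcard : P.card = 2 ^ N + 1 := by
    rw [hPdef, Finset.card_image_of_injective _ (PP.line_injective hN0), Finset.card_univ,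
      Fintype.card_option, PP.card_F hN0]
  have hPart : IsCommPartition (nonIdStrings N) P := by
    refine ⟨?_, ?_, ?_, ?_⟩
    · intro S hS
      obtain ⟨a, _, rfl⟩ := Finset.mem_image.mp hS
      exact PP.line_nonempty hN0 a
    · intro S hS T hT hST
      obtain ⟨a, _, rfl⟩ := Finset.mem_image.mp (Finset.mem_coe.mp hS)
      obtain ⟨a', _, rfl⟩ := Finset.mem_image.mp (Finset.mem_coe.mp hT)
      exact PP.line_disjoint hN0 (fun h => hST (by rw [h]))
    · ext A
      rw [Finset.mem_sup]
      constructor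
      · rintro ⟨S, hS, hA⟩
        obtain ⟨a, _, rfl⟩ := Finset.mem_image.mp hS
        rw [nonIdStrings, Finset.mem_filter]
        refine ⟨Finset.mem_univ _, ?_⟩
        obtain ⟨t, ht, rfl⟩ := (PP.mem_line hN0).mp hA
        exact PP.lpt_ne_id hN0 a ht
      · intro hA
        rw [nonIdStrings, Finset.mem_filter] at hA
        obtain ⟨a, ha⟩ := PP.line_cover hN0 hA.2
        exact ⟨PP.line hN0 a, Finset.mem_image_of_mem _ (Finset.mem_univ _), ha⟩
    · intro S hS A hA B hB
      obtain ⟨a, _, rfl⟩ := Finset.mem_image.mp hS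
      exact (PP.comm_iff A B).mpr (PP.line_isotropic hN0 a hA hB)
  have hsizes : ∀ S ∈ P, S.card = 2 ^ N - 1 := by
    intro S hS
    obtain ⟨a, _, rfl⟩ := Finset.mem_image.mp hS
    exact PP.line_card hN0 a
  exact ⟨⟨⟨P, hPart, hPcard⟩, fun k ⟨Q, hQ, hQc⟩ => hQc ▸ PP.lower_bound hN Q hQ⟩,
    P, hPart, hPcard, hsizes⟩
end
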